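/- Fix a sample size s ≥ 2 and ε ∈ (0,1) with s²ε ≥ 2. Consider the distribution on ℝ that puts mass 1/(2s²ε) at each of -s√ε and s√ε, and mass 1 - 1/(s²ε) at 0. Then this distribution has mean 0 and variance 1, and the probability that the empirical mean μ̂ of s i.i.d. samples satisfies |μ̂| ≥ √ε is at least (1/(sε))·(1 - 1/(sε)). -/

import Mathlib

open Finset

set_option maxHeartbeats 1000000 in
/-- The hard distribution for the empirical mean: mass `1/(2s²ε)` at each of
`-s√ε` and `s√ε`, mass `1 - 1/(s²ε)` at `0`. It has mean `0`, variance `1`,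
and the probability (over `s` i.i.d. samples, modeled as the weighted sum over
all outcome tuples) that the empirical mean has absolute value at least `√ε`
is at least `(1/(sε))·(1 - 1/(sε))`. -/
theorem empirical_mean_bad (s : ℕ) (hs : 2 ≤ s) (ε : ℝ)
    (hε0 : 0 < ε) (hε1 : ε < 1) (hsε : 2 ≤ (s : ℝ) ^ 2 * ε)
    (q v : Fin 3 → ℝ)
    (hq : q = ![1 / (2 * (s : ℝ) ^ 2 * ε), 1 - 1 / ((s : ℝ) ^ 2 * ε),
                1 / (2 * (s : ℝ) ^ 2 * ε)])
    (hv : v = ![-(s * Real.sqrt ε), 0, s * Real.sqrt ε]) :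
    (∑ j, q j * v j = 0) ∧
    (∑ j, q j * v j ^ 2 = 1) ∧
    (1 / ((s : ℝ) * ε)) * (1 - 1 / ((s : ℝ) * ε)) ≤
      ∑ f : Fin s → Fin 3, (∏ i, q (f i)) *
        (if Real.sqrt ε ≤ |(s : ℝ)⁻¹ * ∑ i, v (f i)| then 1 else 0) := by
  have hsR : (0:ℝ) < (s:ℝ) := by
    have : 0 < s := by omega
    exact_mod_cast this
  have hE : (0:ℝ) < (s:ℝ)^2 * ε := by positivity
  have hsq : Real.sqrt ε ^ 2 = ε := Real.sq_sqrt hε0.le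
  have hsqrt_pos : 0 < Real.sqrt ε := Real.sqrt_pos.2 hε0
  -- positivity of weights
  have hc : (0:ℝ) < 1 / (2 * (s:ℝ)^2 * ε) := by positivity
  have hp0 : (0:ℝ) ≤ 1 - 1 / ((s:ℝ)^2 * ε) := by
    have : 1 / ((s:ℝ)^2 * ε) ≤ 1 / 2 := by
      apply one_div_le_one_div_of_le <;> linarith
    linarith
  have hqnn : ∀ j : Fin 3, 0 ≤ q j := by
    intro j
    rw [hq]
    fin_cases j
    · exact hc.le
    · exact hp0
    · exact hc.le
  refine ⟨?_, ?_, ?_⟩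
  · simp [hq, hv, Fin.sum_univ_three]
  · rw [hq, hv]
    simp [Fin.sum_univ_three]
    field_simp
    nlinarith [hsq, hE]
  · -- main bound
    set P : (Fin s → Fin 3) → ℝ := fun f =>
      (∏ i, q (f i)) * (if Real.sqrt ε ≤ |(s : ℝ)⁻¹ * ∑ i, v (f i)| then 1 else 0) with hP
    have hPnn : ∀ f, 0 ≤ P f := by
      intro f
      apply mul_nonneg (Finset.prod_nonneg fun i _ => hqnn _)
      positivity
    -- the injection
    set φ : Fin s × Bool → (Fin s → Fin 3) := fun kb i =>
      if i = kb.1 then (if kb.2 then 2 else 0) else 1 with hφ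
    have hφinj : Function.Injective φ := by
      intro ⟨k, b⟩ ⟨k', b'⟩ h
      have hk : k = k' := by
        by_contra hne
        have h1 := congrFun h k
        simp [hφ, hne] at h1
        rcases b with _ | _ <;> simp at h1 <;> exact absurd h1 (by decide)
      subst hk
      have h2 := congrFun h k
      simp [hφ] at h2
      rcases b with _ | _ <;> rcases b' with _ | _ <;> simp_all
    -- value of P on φ
    have hval : ∀ kb : Fin s × Bool,
        P (φ kb) = 1 / (2 * (s:ℝ)^2 * ε) * (1 - 1 / ((s:ℝ)^2 * ε)) ^ (s - 1) := by
      rintro ⟨k, b⟩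
      have hqφ : ∀ i, q (φ (k, b) i) =
          if i = k then 1 / (2 * (s:ℝ)^2 * ε) else (1 - 1 / ((s:ℝ)^2 * ε)) := by
        intro i
        by_cases h : i = k <;> simp [hφ, h, hq] <;> cases b <;> simp
      have hvφ : ∀ i, v (φ (k, b) i) =
          if i = k then (if b then (s:ℝ) * Real.sqrt ε else -((s:ℝ) * Real.sqrt ε)) else 0 := by
        intro i
        by_cases h : i = k <;> simp [hφ, h, hv] <;> cases b <;> simp
      have hprod : (∏ i, q (φ (k, b) i)) =
          1 / (2 * (s:ℝ)^2 * ε) * (1 - 1 / ((s:ℝ)^2 * ε)) ^ (s - 1) := by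
        rw [Finset.prod_congr rfl fun i _ => hqφ i]
        rw [← Finset.mul_prod_erase Finset.univ _ (Finset.mem_univ k)]
        rw [if_pos rfl]
        congr 1
        rw [Finset.prod_congr rfl (fun i hi => if_neg (Finset.ne_of_mem_erase hi)),
          Finset.prod_const, Finset.card_erase_of_mem (Finset.mem_univ k), Finset.card_univ,
          Fintype.card_fin]
      have hsum : (∑ i, v (φ (k, b) i)) =
          (if b then (s:ℝ) * Real.sqrt ε else -((s:ℝ) * Real.sqrt ε)) := by
        rw [Finset.sum_congr rfl fun i _ => hvφ i, Finset.sum_ite_eq' Finset.univ k,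
          if_pos (Finset.mem_univ k)]
      have habs : |(s : ℝ)⁻¹ * ∑ i, v (φ (k, b) i)| = Real.sqrt ε := by
        rcases b with _ | _
        · rw [hsum, if_neg (by decide : ¬(false = true)), mul_neg, abs_neg,
            abs_of_pos (by positivity : (0:ℝ) < (s:ℝ)⁻¹ * ((s:ℝ) * Real.sqrt ε))]
          field_simp
        · rw [hsum, if_pos rfl,
            abs_of_pos (by positivity : (0:ℝ) < (s:ℝ)⁻¹ * ((s:ℝ) * Real.sqrt ε))]
          field_simp
      rw [hP]
      simp only [hprod, habs, if_pos (le_refl (Real.sqrt ε)), mul_one]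
    -- sum over image
    have himg : ∑ kb : Fin s × Bool, P (φ kb) ≤ ∑ f : Fin s → Fin 3, P f := by
      rw [← Finset.sum_image (fun x _ y _ h => hφinj h)]
      exact Finset.sum_le_sum_of_subset_of_nonneg (Finset.subset_univ _)
        (fun f _ _ => hPnn f)
    have hcard : ∑ kb : Fin s × Bool, P (φ kb) =
        (2 * s : ℝ) * (1 / (2 * (s:ℝ)^2 * ε) * (1 - 1 / ((s:ℝ)^2 * ε)) ^ (s - 1)) := by
      rw [Finset.sum_congr rfl fun kb _ => hval kb, Finset.sum_const, Finset.card_univ]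
      simp [Fintype.card_prod, mul_comm]
    -- Bernoulli
    have hber : 1 - 1 / ((s:ℝ) * ε) ≤ (1 - 1 / ((s:ℝ)^2 * ε)) ^ (s - 1) := by
      have h1 : (-2:ℝ) ≤ -(1 / ((s:ℝ)^2 * ε)) := by
        have : 1 / ((s:ℝ)^2 * ε) ≤ 1 := by
          rw [div_le_one hE]; linarith
        linarith
      have h2 := one_add_mul_le_pow h1 (s - 1)
      have hcast : ((s - 1 : ℕ) : ℝ) = (s:ℝ) - 1 := by
        have : (1:ℕ) ≤ s := by omega
        push_cast [Nat.cast_sub this]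
        ring
      rw [hcast] at h2
      have h3 : 1 - 1 / ((s:ℝ) * ε) ≤ 1 + ((s:ℝ) - 1) * -(1 / ((s:ℝ)^2 * ε)) := by
        have key : ((s:ℝ) - 1) / ((s:ℝ)^2 * ε) ≤ (s:ℝ) / ((s:ℝ)^2 * ε) :=
          (div_le_div_iff_of_pos_right hE).2 (by linarith)
        have e1 : (s:ℝ) / ((s:ℝ)^2 * ε) = 1 / ((s:ℝ) * ε) := by
          field_simp
        have e2 : ((s:ℝ) - 1) * -(1 / ((s:ℝ)^2 * ε)) = -(((s:ℝ) - 1) / ((s:ℝ)^2 * ε)) := by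
          ring
        linarith
      calc 1 - 1 / ((s:ℝ) * ε) ≤ 1 + ((s:ℝ) - 1) * -(1 / ((s:ℝ)^2 * ε)) := h3
        _ ≤ (1 + -(1 / ((s:ℝ)^2 * ε))) ^ (s-1) := h2
        _ = (1 - 1 / ((s:ℝ)^2 * ε)) ^ (s-1) := by ring_nf
    calc (1 / ((s : ℝ) * ε)) * (1 - 1 / ((s : ℝ) * ε))
        ≤ (1 / ((s : ℝ) * ε)) * (1 - 1 / ((s:ℝ)^2 * ε)) ^ (s - 1) := by
          apply mul_le_mul_of_nonneg_left hber (by positivity)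
      _ = (2 * s : ℝ) * (1 / (2 * (s:ℝ)^2 * ε) * (1 - 1 / ((s:ℝ)^2 * ε)) ^ (s - 1)) := by
          have key : (2 * (s:ℝ)) * (1 / (2 * (s:ℝ)^2 * ε)) = 1 / ((s:ℝ) * ε) := by
            field_simp
          rw [← mul_assoc, key]
      _ = ∑ kb : Fin s × Bool, P (φ kb) := hcard.symm
      _ ≤ ∑ f : Fin s → Fin 3, P f := himg
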